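/- In the two-timescale stochastic approximation setting with (θ_n,w_n)-dominated martingale difference noise, for every n ≥ n_0 and every ε > 0: Pr(G_n ∩ {‖L^{(θ)}_{n+1}‖ ≥ ε} | G'_{n_0}) ≤ 2d² exp(−ε²/(d³ L_θ a_{n+1})) and Pr(G_n ∩ {‖L^{(w)}_{n+1}‖ ≥ ε} | G'_{n_0}) ≤ 2d² exp(−ε²/(d³ L_w b_{n+1})), where a_{n+1} = Σ_{k=0}^n α_k² e^{−2q_1 Σ_{j=k+1}^n α_j}, b_{n+1} = Σ_{k=0}^n β_k² e^{−2q_2 Σ_{j=k+1}^n β_j}, and L_θ, L_w are explicit constants depending on C_θ, C_w, m_1, m_2, ‖W_1‖, ‖W_2^{-1}‖, C_R^θ R^θ, C_R^w R^w, ‖θ*‖, ‖w*‖. -/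

import Mathlib

open MeasureTheory Matrix ProbabilityTheory
open scoped BigOperators ENNReal NNReal RealInnerProductSpace

noncomputable section

abbrev E (d : ℕ) := EuclideanSpace ℝ (Fin d)

variable {d : ℕ}

def app (A : Matrix (Fin d) (Fin d) ℝ) (x : E d) : E d :=
  Matrix.toEuclideanCLM (𝕜 := ℝ) A x

def opNorm (A : Matrix (Fin d) (Fin d) ℝ) : ℝ :=
  ‖Matrix.toEuclideanCLM (𝕜 := ℝ) A‖

/-- Positive definiteness (not necessarily symmetric). -/
def PosDefNS (A : Matrix (Fin d) (Fin d) ℝ) : Prop :=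
  ∀ x : E d, x ≠ 0 → 0 < ⟪x, app A x⟫

def lambdaMin (A : Matrix (Fin d) (Fin d) ℝ) : ℝ :=
  ⨅ x : Metric.sphere (0 : E d) 1, ⟪(x : E d), app A (x : E d)⟫

/-- Stepsizes `(n+1)^{-a}`. -/
def steps (a : ℝ) (n : ℕ) : ℝ := ((n : ℝ) + 1) ^ (-a)

def h1 (v1 : E d) (Γ1 W1 : Matrix (Fin d) (Fin d) ℝ) (θ w : E d) : E d :=
  v1 - app Γ1 θ - app W1 w

def h2 (v2 : E d) (Γ2 W2 : Matrix (Fin d) (Fin d) ℝ) (θ w : E d) : E d :=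
  v2 - app Γ2 θ - app W2 w

def X1 (Γ1 Γ2 W1 W2 : Matrix (Fin d) (Fin d) ℝ) : Matrix (Fin d) (Fin d) ℝ :=
  Γ1 - W1 * W2⁻¹ * Γ2

def thetaStar (v1 v2 : E d) (Γ1 Γ2 W1 W2 : Matrix (Fin d) (Fin d) ℝ) : E d :=
  app (X1 Γ1 Γ2 W1 W2)⁻¹ (v1 - app (W1 * W2⁻¹) v2)

def wStar (v1 v2 : E d) (Γ1 Γ2 W1 W2 : Matrix (Fin d) (Fin d) ℝ) : E d :=
  app W2⁻¹ (v2 - app Γ2 (thetaStar v1 v2 Γ1 Γ2 W1 W2))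

/-- The matrix product `∏_{j=a}^{b} (I − c_j X)` (equal to `1` if `b < a`). -/
def Mprod (X : Matrix (Fin d) (Fin d) ℝ) (c : ℕ → ℝ) (a b : ℕ) :
    Matrix (Fin d) (Fin d) ℝ :=
  ((List.range' a (b + 1 - a)).map fun j => (1 : Matrix (Fin d) (Fin d) ℝ) - c j • X).prod

/-- The aggregated noise `L^{(θ)}_{n+1}` (as a function of `n₀` and `n`). -/
def Lth {Ω : Type*} (Γ1 Γ2 W1 W2 : Matrix (Fin d) (Fin d) ℝ) (α : ℝ)
    (M1 M2 : ℕ → Ω → E d) (n0 n : ℕ) (ω : Ω) : E d :=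
  ∑ k ∈ Finset.Icc n0 n,
    steps α k • app (Mprod (X1 Γ1 Γ2 W1 W2) (steps α) (k + 1) n)
      (M1 (k + 1) ω - app (W1 * W2⁻¹) (M2 (k + 1) ω))

/-- The aggregated noise `L^{(w)}_{n+1}` (as a function of `n₀` and `n`). -/
def Lww {Ω : Type*} (W2 : Matrix (Fin d) (Fin d) ℝ) (β : ℝ) (M2 : ℕ → Ω → E d)
    (n0 n : ℕ) (ω : Ω) : E d :=
  ∑ k ∈ Finset.Icc n0 n,
    steps β k • app (Mprod W2 (steps β) (k + 1) n) (M2 (k + 1) ω)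

variable {Ω : Type*} [MeasurableSpace Ω]

/-- The natural filtration `F_n = σ(θ₀, w₀, M⁽¹⁾₁, M⁽²⁾₁, …, M⁽¹⁾_n, M⁽²⁾_n)`. -/
def natF (θ0 w0 : Ω → E d) (M1 M2 : ℕ → Ω → E d) (n : ℕ) : MeasurableSpace Ω :=
  MeasurableSpace.comap θ0 inferInstance ⊔ MeasurableSpace.comap w0 inferInstance ⊔
    ⨆ k ∈ Set.Icc 1 n,
      (MeasurableSpace.comap (M1 k) inferInstance ⊔ MeasurableSpace.comap (M2 k) inferInstance)

set_option maxHeartbeats 1000000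
set_option synthInstance.maxHeartbeats 400000

section LinAlg

variable {d : ℕ}

lemma app_le (A : Matrix (Fin d) (Fin d) ℝ) (x : E d) : ‖app A x‖ ≤ opNorm A * ‖x‖ :=
  (Matrix.toEuclideanCLM (𝕜 := ℝ) A).le_opNorm x

lemma opNormNN (A : Matrix (Fin d) (Fin d) ℝ) : 0 ≤ opNorm A := norm_nonneg _

lemma app_add (A B : Matrix (Fin d) (Fin d) ℝ) (x : E d) :
    app (A + B) x = app A x + app B x := by
  simp [app, map_add]

lemma app_smul (A : Matrix (Fin d) (Fin d) ℝ) (c : ℝ) (x : E d) :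
    app A (c • x) = c • app A x := by
  simp [app]

lemma inner_app_transpose (X : Matrix (Fin d) (Fin d) ℝ) (x : E d) :
    ⟪x, app Xᵀ x⟫ = ⟪x, app X x⟫ := by
  have h1 : Xᵀ = Xᴴ := by
    ext i j
    simp [Matrix.conjTranspose_apply]
  have h2 : Matrix.toEuclideanCLM (𝕜 := ℝ) Xᴴ =
      ContinuousLinearMap.adjoint (Matrix.toEuclideanCLM (𝕜 := ℝ) X) := by
    rw [← ContinuousLinearMap.star_eq_adjoint, ← map_star]
    rfl
  rw [app, h1, h2, ContinuousLinearMap.adjoint_inner_right]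
  exact real_inner_comm _ _

/-- coercivity from lambdaMin -/
lemma inner_ge_of_posdef (hd : 0 < d) (X : Matrix (Fin d) (Fin d) ℝ) (hX : PosDefNS X)
    (q : ℝ) (hq : q = lambdaMin (X + Xᵀ) / 4) :
    0 < q ∧ ∀ x : E d, 2 * q * ‖x‖ ^ 2 ≤ ⟪x, app X x⟫ := by
  haveI : Nonempty (Fin d) := ⟨⟨0, hd⟩⟩
  set f : E d → ℝ := fun x => ⟪x, app (X + Xᵀ) x⟫ with hf
  have hfeq : ∀ x : E d, f x = 2 * ⟪x, app X x⟫ := by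
    intro x
    simp only [hf, app_add, inner_add_right, inner_app_transpose]
    ring
  have hcont : Continuous f := by
    have : Continuous fun x : E d => app (X + Xᵀ) x :=
      (Matrix.toEuclideanCLM (𝕜 := ℝ) (X + Xᵀ)).continuous
    exact continuous_inner.comp (continuous_id.prodMk this)
  have hne : (Metric.sphere (0 : E d) 1).Nonempty :=
    NormedSpace.sphere_nonempty.mpr zero_le_one
  obtain ⟨x₀, hx₀mem, hmin⟩ :=
    (isCompact_sphere (0 : E d) 1).exists_isMinOn hne hcont.continuousOn
  have hx₀norm : ‖x₀‖ = 1 := by simpa using hx₀mem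
  have hx₀ne : x₀ ≠ 0 := by
    intro h; rw [h] at hx₀norm; simp at hx₀norm
  have hfx₀ : 0 < f x₀ := by
    rw [hfeq]
    have := hX x₀ hx₀ne
    linarith
  have hlam_ge : f x₀ ≤ lambdaMin (X + Xᵀ) := by
    rw [lambdaMin]
    haveI : Nonempty (Metric.sphere (0 : E d) 1) := hne.to_subtype
    exact le_ciInf fun y => hmin y.2
  have hbdd : BddBelow (Set.range fun y : Metric.sphere (0 : E d) 1 => f (y : E d)) := by
    refine ⟨f x₀, ?_⟩
    rintro r ⟨y, rfl⟩
    exact hmin y.2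
  have hq0 : 0 < q := by rw [hq]; linarith
  refine ⟨hq0, fun x => ?_⟩
  rcases eq_or_ne x 0 with rfl | hx
  · simp
  · have hxn : (0:ℝ) < ‖x‖ := norm_pos_iff.mpr hx
    set u : E d := ‖x‖⁻¹ • x with hu
    have humem : u ∈ Metric.sphere (0 : E d) 1 := by
      simp [hu, norm_smul, abs_of_nonneg (inv_nonneg.mpr hxn.le), inv_mul_cancel₀ hxn.ne']
    have hlam_le : lambdaMin (X + Xᵀ) ≤ f u := by
      rw [lambdaMin]
      exact ciInf_le hbdd ⟨u, humem⟩
    have hfu : f u = ‖x‖⁻¹ ^ 2 * f x := by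
      simp only [hf, hu, app_smul, inner_smul_left, inner_smul_right, RCLike.star_def,
        conj_trivial]
      ring
    have h4q : 4 * q = lambdaMin (X + Xᵀ) := by rw [hq]; ring
    have : 4 * q ≤ ‖x‖⁻¹ ^ 2 * f x := by rw [h4q, ← hfu]; exact hlam_le.trans (le_of_eq rfl)
    have h2 : 4 * q * ‖x‖ ^ 2 ≤ f x := by
      have hpos : (0:ℝ) < ‖x‖ ^ 2 := by positivity
      calc 4 * q * ‖x‖ ^ 2 ≤ (‖x‖⁻¹ ^ 2 * f x) * ‖x‖ ^ 2 := by nlinarith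
        _ = f x := by field_simp
    rw [hfeq] at h2
    nlinarith

end LinAlg
section ProdBound

variable {d : ℕ}

lemma steps_pos (a : ℝ) (n : ℕ) : 0 < steps a n := by
  apply Real.rpow_pos_of_pos; positivity

lemma steps_le_one (a : ℝ) (ha : 0 ≤ a) (n : ℕ) : steps a n ≤ 1 := by
  apply Real.rpow_le_one_of_one_le_of_nonpos
  · have : (0:ℝ) ≤ (n:ℝ) := Nat.cast_nonneg n
    linarith
  · linarith

lemma exists_steps_small (a c : ℝ) (ha : 0 < a) (hc : 0 < c) :
    ∃ N₀ : ℕ, ∀ j, N₀ ≤ j → steps a j ≤ c := by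
  have h1 : Filter.Tendsto (fun n : ℕ => ((n : ℝ) + 1)) Filter.atTop Filter.atTop :=
    Filter.tendsto_atTop_add_const_right _ 1 tendsto_natCast_atTop_atTop
  have h2 : Filter.Tendsto (fun n : ℕ => steps a n) Filter.atTop (nhds 0) :=
    (tendsto_rpow_neg_atTop ha).comp h1
  have h3 : ∀ᶠ n in Filter.atTop, steps a n < c := h2.eventually (gt_mem_nhds hc)
  obtain ⟨N₀, hN₀⟩ := Filter.eventually_atTop.mp h3
  exact ⟨N₀, fun j hj => (hN₀ j hj).le⟩

lemma norm_one_sub_smul_le (hd : 0 < d) (X : Matrix (Fin d) (Fin d) ℝ) (q : ℝ)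
    (hq : 0 < q) (hcoer : ∀ x : E d, 2 * q * ‖x‖ ^ 2 ≤ ⟪x, app X x⟫)
    (s : ℝ) (hs0 : 0 ≤ s) (hs : s * opNorm X ^ 2 ≤ 2 * q) :
    opNorm ((1 : Matrix (Fin d) (Fin d) ℝ) - s • X) ≤ Real.exp (-(q * s)) := by
  apply ContinuousLinearMap.opNorm_le_bound _ (Real.exp_nonneg _)
  intro x
  have happ : (Matrix.toEuclideanCLM (𝕜 := ℝ) ((1 : Matrix (Fin d) (Fin d) ℝ) - s • X)) x
      = x - s • app X x := by
    rw [_root_.map_sub, _root_.map_smul, _root_.map_one]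
    rfl
  rw [happ]
  have hexpand : ‖x - s • app X x‖ ^ 2
      = ‖x‖ ^ 2 - 2 * (s * ⟪x, app X x⟫) + s ^ 2 * ‖app X x‖ ^ 2 := by
    rw [@norm_sub_sq_real, inner_smul_right, norm_smul, Real.norm_eq_abs,
      abs_of_nonneg hs0, mul_pow]
  have hAx : ‖app X x‖ ^ 2 ≤ opNorm X ^ 2 * ‖x‖ ^ 2 := by
    have := app_le X x
    have h0 : (0:ℝ) ≤ ‖app X x‖ := norm_nonneg _
    nlinarith [norm_nonneg x, opNormNN X]
  have hco := hcoer x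
  have hsq : ‖x - s • app X x‖ ^ 2 ≤ (1 - 2 * q * s) * ‖x‖ ^ 2 := by
    have hxs : (0:ℝ) ≤ ‖x‖^2 := by positivity
    have k1 := mul_le_mul_of_nonneg_left hco hs0
    have k2 := mul_le_mul_of_nonneg_left hAx (sq_nonneg s)
    have k3 := mul_le_mul_of_nonneg_right hs (mul_nonneg hs0 hxs)
    nlinarith
  have hexp : (1 - 2 * q * s) ≤ Real.exp (-(2 * q * s)) := by
    have := Real.add_one_le_exp (-(2 * q * s)); linarith
  have hfin : ‖x - s • app X x‖ ^ 2 ≤ (Real.exp (-(q * s)) * ‖x‖) ^ 2 := by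
    have he : (Real.exp (-(q * s)) * ‖x‖) ^ 2 = Real.exp (-(2 * q * s)) * ‖x‖ ^ 2 := by
      rw [mul_pow, pow_two, ← Real.exp_add]; ring_nf
    rw [he]
    calc ‖x - s • app X x‖ ^ 2 ≤ (1 - 2 * q * s) * ‖x‖ ^ 2 := hsq
      _ ≤ Real.exp (-(2 * q * s)) * ‖x‖ ^ 2 := by nlinarith [sq_nonneg ‖x‖]
  have h1 := Real.sqrt_le_sqrt hfin
  rwa [Real.sqrt_sq (norm_nonneg _), Real.sqrt_sq (by positivity)] at h1

lemma opNorm_listprod_le (hd : 0 < d) (X : Matrix (Fin d) (Fin d) ℝ) (s : ℕ → ℝ) :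
    ∀ (len a : ℕ),
      opNorm ((List.range' a len).map fun j => (1 : Matrix (Fin d) (Fin d) ℝ) - s j • X).prod
        ≤ ∏ i ∈ Finset.range len, opNorm ((1 : Matrix (Fin d) (Fin d) ℝ) - s (a + i) • X) := by
  haveI : Nonempty (Fin d) := ⟨⟨0, hd⟩⟩
  intro len
  induction len with
  | zero =>
    intro a
    simp only [List.range', List.map_nil, List.prod_nil, Finset.range_zero, Finset.prod_empty]
    rw [opNorm, _root_.map_one]
    exact le_of_eq norm_one
  | succ n ih =>
    intro a
    rw [List.range'_concat, List.map_append, List.prod_append, Finset.prod_range_succ]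
    simp only [List.map_cons, List.map_nil, List.prod_cons, List.prod_nil, mul_one, one_mul]
    rw [opNorm, _root_.map_mul]
    exact le_trans (norm_mul_le _ _) (mul_le_mul_of_nonneg_right (ih a) (norm_nonneg _))

lemma exists_prod_bound (hd : 0 < d) (X : Matrix (Fin d) (Fin d) ℝ) (hX : PosDefNS X)
    (q : ℝ) (hq : q = lambdaMin (X + Xᵀ) / 4) (a : ℝ) (ha0 : 0 < a) (ha1 : a ≤ 1) :
    0 < q ∧ ∃ C : ℝ, 1 ≤ C ∧ ∀ k n : ℕ,
      opNorm (Mprod X (steps a) k n) ≤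
        C * Real.exp (-(q * ∑ j ∈ Finset.Icc k n, steps a j)) := by
  obtain ⟨hq0, hcoer⟩ := inner_ge_of_posdef hd X hX q hq
  refine ⟨hq0, ?_⟩
  obtain ⟨N₀, hN₀⟩ := exists_steps_small a (2 * q / (opNorm X ^ 2 + 1)) ha0 (by positivity)
  set B : ℝ := (1 + opNorm X) * Real.exp q with hB
  have hB1 : 1 ≤ B := by
    have h1 : 1 ≤ 1 + opNorm X := by have := opNormNN X; linarith
    have h2 : 1 ≤ Real.exp q := Real.one_le_exp hq0.le
    nlinarith
  have hfac : ∀ j : ℕ, opNorm ((1 : Matrix (Fin d) (Fin d) ℝ) - steps a j • X)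
      ≤ (if j < N₀ then B else 1) * Real.exp (-(q * steps a j)) := by
    intro j
    by_cases hj : j < N₀
    · simp only [hj, if_pos]
      have h1 : opNorm ((1 : Matrix (Fin d) (Fin d) ℝ) - steps a j • X)
          ≤ 1 + opNorm X := by
        haveI : Nonempty (Fin d) := ⟨⟨0, hd⟩⟩
        rw [opNorm, _root_.map_sub, _root_.map_one]
        refine le_trans (norm_sub_le _ _) ?_
        rw [norm_one, _root_.map_smul]
        have h5 : ‖steps a j • Matrix.toEuclideanCLM (𝕜 := ℝ) X‖
            ≤ steps a j * opNorm X := by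
          refine le_trans (ContinuousLinearMap.opNorm_smul_le _ _) ?_
          rw [Real.norm_eq_abs, abs_of_nonneg (steps_pos a j).le, opNorm]
        have h6 := mul_le_mul_of_nonneg_right (steps_le_one a ha0.le j) (opNormNN X)
        linarith
      have h2 : Real.exp (-q) ≤ Real.exp (-(q * steps a j)) := by
        apply Real.exp_le_exp.mpr
        have h3 := steps_le_one a ha0.le j
        nlinarith [steps_pos a j]
      calc opNorm ((1 : Matrix (Fin d) (Fin d) ℝ) - steps a j • X) ≤ 1 + opNorm X := h1
        _ = B * Real.exp (-q) := by
            rw [hB, mul_assoc, ← Real.exp_add]; simp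
        _ ≤ B * Real.exp (-(q * steps a j)) := by
            apply mul_le_mul_of_nonneg_left h2 (by linarith)
    · simp only [hj, if_neg, not_false_iff, one_mul]
      apply norm_one_sub_smul_le hd X q hq0 hcoer _ (steps_pos a j).le
      have hsm := hN₀ j (not_lt.mp hj)
      have h4 : steps a j * (opNorm X ^ 2 + 1) ≤ 2 * q := by
        rw [div_eq_mul_inv] at hsm
        have hpos : (0:ℝ) < opNorm X ^ 2 + 1 := by positivity
        calc steps a j * (opNorm X ^ 2 + 1)
            ≤ 2 * q * (opNorm X ^ 2 + 1)⁻¹ * (opNorm X ^ 2 + 1) :=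
              mul_le_mul_of_nonneg_right hsm hpos.le
          _ = 2 * q := by field_simp
      nlinarith [steps_pos a j, sq_nonneg (opNorm X)]
  refine ⟨B ^ N₀, one_le_pow₀ hB1, fun k n => ?_⟩
  rw [Mprod]
  refine le_trans (opNorm_listprod_le hd X (steps a) (n + 1 - k) k) ?_
  have step2 : ∏ i ∈ Finset.range (n + 1 - k),
        opNorm ((1 : Matrix (Fin d) (Fin d) ℝ) - steps a (k + i) • X)
      ≤ ∏ i ∈ Finset.range (n + 1 - k),
        ((if k + i < N₀ then B else 1) * Real.exp (-(q * steps a (k + i)))) :=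
    Finset.prod_le_prod (fun i _ => opNormNN _) (fun i _ => hfac (k + i))
  refine step2.trans ?_
  rw [Finset.prod_mul_distrib]
  have hprodexp : ∏ i ∈ Finset.range (n + 1 - k), Real.exp (-(q * steps a (k + i)))
      = Real.exp (-(q * ∑ j ∈ Finset.Icc k n, steps a j)) := by
    rw [← Real.exp_sum]
    congr 1
    rw [← Finset.Ico_add_one_right_eq_Icc, Finset.sum_Ico_eq_sum_range, Finset.mul_sum,
      ← Finset.sum_neg_distrib]
  rw [hprodexp]
  apply mul_le_mul_of_nonneg_right _ (Real.exp_nonneg _)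
  have hfilt : (∏ i ∈ Finset.range (n + 1 - k), (if k + i < N₀ then B else 1))
      = B ^ ((Finset.range (n + 1 - k)).filter (fun i => k + i < N₀)).card := by
    rw [← Finset.prod_const B, Finset.prod_filter]
  rw [hfilt]
  apply pow_le_pow_right₀ hB1
  have hsub : ((Finset.range (n + 1 - k)).filter (fun i => k + i < N₀)).card
      ≤ (Finset.range N₀).card := by
    apply Finset.card_le_card
    intro i hi
    simp only [Finset.mem_filter, Finset.mem_range] at hi ⊢
    omega
  simpa using hsub

end ProdBound
section CondTools

open Filter

variable {Ω : Type*} {m m0 : MeasurableSpace Ω} {μ : MeasureTheory.Measure Ω}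

lemma integrable_of_bounded' [IsFiniteMeasure μ] {X : Type*} [NormedAddCommGroup X]
    {f : Ω → X} (hf : AEStronglyMeasurable f μ)
    (C : ℝ) (h : ∀ ω, ‖f ω‖ ≤ C) : Integrable f μ :=
  ⟨hf, HasFiniteIntegral.of_bounded (ae_of_all _ h)⟩

lemma condexp_clm [IsFiniteMeasure μ] (hm : m ≤ m0)
    {EE FF : Type*} [NormedAddCommGroup EE] [NormedSpace ℝ EE] [CompleteSpace EE]
    [NormedAddCommGroup FF] [NormedSpace ℝ FF] [CompleteSpace FF]
    (T : EE →L[ℝ] FF) {f : Ω → EE} (hf : Integrable f μ) :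
    (fun ω => T ((μ[f|m]) ω)) =ᵐ[μ] μ[fun ω => T (f ω)|m] := by
  haveI : IsFiniteMeasure (μ.trim hm) := isFiniteMeasure_trim hm
  refine ae_eq_condExp_of_forall_setIntegral_eq hm (T.integrable_comp hf) ?_ ?_ ?_
  · intro s _ _
    exact (T.integrable_comp integrable_condExp).integrableOn
  · intro s hs _
    rw [ContinuousLinearMap.integral_comp_comm T integrable_condExp.integrableOn,
      setIntegral_condExp hm hf hs,
      ContinuousLinearMap.integral_comp_comm T hf.integrableOn]
  · exact (T.continuous.comp_stronglyMeasurable stronglyMeasurable_condExp).aestronglyMeasurable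

lemma condexp_clm_zero [IsFiniteMeasure μ] (hm : m ≤ m0)
    {EE FF : Type*} [NormedAddCommGroup EE] [NormedSpace ℝ EE] [CompleteSpace EE]
    [NormedAddCommGroup FF] [NormedSpace ℝ FF] [CompleteSpace FF]
    (T : EE →L[ℝ] FF) {f : Ω → EE} (hf : Integrable f μ)
    (h0 : μ[f|m] =ᵐ[μ] 0) :
    μ[fun ω => T (f ω)|m] =ᵐ[μ] 0 := by
  refine (condexp_clm hm T hf).symm.trans ?_
  filter_upwards [h0] with ω hω
  simp only [hω, Pi.zero_apply, map_zero]

/-- chord bound for the exponential -/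
lemma exp_chord_bound {x c t : ℝ} (hc : 0 < c) (hx : |x| ≤ c) :
    Real.exp (t * x) ≤ Real.cosh (t * c) + (Real.sinh (t * c) / c) * x := by
  have hl : -c ≤ x := neg_le_of_abs_le hx
  have hr : x ≤ c := le_of_abs_le hx
  set lam : ℝ := (c - x) / (2 * c) with hlam
  have hlam0 : 0 ≤ lam := by
    apply div_nonneg <;> linarith
  have hlam1 : 0 ≤ 1 - lam := by
    rw [hlam]
    rw [sub_nonneg, div_le_one (by linarith)]
    linarith
  have harg : lam • (t * (-c)) + (1 - lam) • (t * c) = t * x := by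
    simp only [smul_eq_mul, hlam]
    field_simp
    ring
  have hconv := convexOn_exp.2 (Set.mem_univ (t * (-c))) (Set.mem_univ (t * c))
    hlam0 hlam1 (by ring)
  rw [harg] at hconv
  refine hconv.trans (le_of_eq ?_)
  simp only [smul_eq_mul, hlam, Real.cosh_eq, Real.sinh_eq, mul_neg]
  field_simp
  ring

/-- Conditional Azuma–Hoeffding mgf bound. -/
lemma azuma_mgf [IsProbabilityMeasure μ] (F : ℕ → MeasurableSpace Ω) (hle : ∀ n, F n ≤ m0)
    (hmono : Monotone F) (D : ℕ → Ω → ℝ) (c : ℕ → ℝ) (n0 : ℕ)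
    (hmeas : ∀ k, n0 ≤ k → StronglyMeasurable[F (k + 1)] (D k))
    (hc : ∀ k, n0 ≤ k → 0 < c k)
    (hbdd : ∀ k, n0 ≤ k → ∀ ω, |D k ω| ≤ c k)
    (hmds : ∀ k, n0 ≤ k → μ[D k|F k] =ᵐ[μ] 0)
    (t : ℝ) :
    ∀ N, n0 ≤ N →
      μ[fun ω => Real.exp (t * ∑ k ∈ Finset.Ico n0 N, D k ω)|F n0]
        ≤ᵐ[μ] fun _ => Real.exp (t ^ 2 / 2 * ∑ k ∈ Finset.Ico n0 N, c k ^ 2) := by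
  intro N hN
  induction N, hN using Nat.le_induction with
  | base =>
    simp only [Finset.Ico_self, Finset.sum_empty, mul_zero, Real.exp_zero]
    rw [condExp_const (hle n0)]
  | succ N hN ih =>
    have hDmeas : ∀ k, n0 ≤ k → k < N + 1 → StronglyMeasurable[F N.succ] (D k) :=
      fun k hk hk' => (hmeas k hk).mono (hmono hk')
    set S : Ω → ℝ := fun ω => ∑ k ∈ Finset.Ico n0 N, D k ω with hS
    have hSmeas : StronglyMeasurable[F N] S := by
      apply Finset.stronglyMeasurable_fun_sum
      intro k hk
      rw [Finset.mem_Ico] at hk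
      exact (hmeas k hk.1).mono (hmono hk.2)
    have hSmeas0 : StronglyMeasurable S := hSmeas.mono (hle N)
    set CS : ℝ := ∑ k ∈ Finset.Ico n0 N, c k with hCS
    have hSbdd : ∀ ω, |S ω| ≤ CS := by
      intro ω
      refine (Finset.abs_sum_le_sum_abs _ _).trans ?_
      apply Finset.sum_le_sum
      intro k hk
      rw [Finset.mem_Ico] at hk
      exact hbdd k hk.1 ω
    have hexpS_meas : StronglyMeasurable fun ω => Real.exp (t * S ω) :=
      Real.continuous_exp.comp_stronglyMeasurable (hSmeas0.const_mul t)
    have hexpS_bdd : ∀ ω, ‖Real.exp (t * S ω)‖ ≤ Real.exp (|t| * CS) := by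
      intro ω
      rw [Real.norm_eq_abs, abs_of_pos (Real.exp_pos _)]
      apply Real.exp_le_exp.mpr
      calc t * S ω ≤ |t * S ω| := le_abs_self _
        _ = |t| * |S ω| := abs_mul t (S ω)
        _ ≤ |t| * CS := mul_le_mul_of_nonneg_left (hSbdd ω) (abs_nonneg t)
    have hintexpS : Integrable (fun ω => Real.exp (t * S ω)) μ :=
      integrable_of_bounded' hexpS_meas.aestronglyMeasurable _ hexpS_bdd
    have hDN : StronglyMeasurable (D N) := (hmeas N hN).mono (hle _)
    have hexpD_meas : StronglyMeasurable fun ω => Real.exp (t * D N ω) :=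
      Real.continuous_exp.comp_stronglyMeasurable (hDN.const_mul t)
    have hexpD_bdd : ∀ ω, ‖Real.exp (t * D N ω)‖ ≤ Real.exp (|t| * c N) := by
      intro ω
      rw [Real.norm_eq_abs, abs_of_pos (Real.exp_pos _)]
      apply Real.exp_le_exp.mpr
      calc t * D N ω ≤ |t * D N ω| := le_abs_self _
        _ = |t| * |D N ω| := abs_mul t (D N ω)
        _ ≤ |t| * c N := mul_le_mul_of_nonneg_left (hbdd N hN ω) (abs_nonneg t)
    have hintexpD : Integrable (fun ω => Real.exp (t * D N ω)) μ :=
      integrable_of_bounded' hexpD_meas.aestronglyMeasurable _ hexpD_bdd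
    have hintprod : Integrable ((fun ω => Real.exp (t * S ω)) *
        fun ω => Real.exp (t * D N ω)) μ :=
      hintexpD.bdd_mul hexpS_meas.aestronglyMeasurable (ae_of_all _ hexpS_bdd)
    -- the function split
    have hfeq : (fun ω => Real.exp (t * ∑ k ∈ Finset.Ico n0 (N + 1), D k ω))
        = (fun ω => Real.exp (t * S ω)) * fun ω => Real.exp (t * D N ω) := by
      funext ω
      rw [Finset.sum_Ico_succ_top hN]
      simp only [Pi.mul_apply, hS, ← Real.exp_add]
      ring_nf
    rw [hfeq]
    -- tower property
    have htower := (condExp_condExp_of_le (hmono hN) (hle N)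
      (μ := μ) (f := (fun ω => Real.exp (t * S ω)) * fun ω => Real.exp (t * D N ω))).symm
    -- pull out at level F N
    have hexpS_measN : StronglyMeasurable[F N] fun ω => Real.exp (t * S ω) :=
      Real.continuous_exp.comp_stronglyMeasurable (hSmeas.const_mul t)
    have hpull := condExp_mul_of_stronglyMeasurable_left (m := F N) (μ := μ)
      hexpS_measN hintprod hintexpD
    -- conditional Hoeffding bound on the last increment
    have hcN := hc N hN
    set KD : ℝ := Real.exp (t ^ 2 / 2 * c N ^ 2) with hKD
    have hchord : ∀ ω, Real.exp (t * D N ω)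
        ≤ Real.cosh (t * c N) + (Real.sinh (t * c N) / c N) * D N ω :=
      fun ω => exp_chord_bound hcN (hbdd N hN ω)
    have hintD : Integrable (D N) μ :=
      integrable_of_bounded' hDN.aestronglyMeasurable (c N)
        (fun ω => by rw [Real.norm_eq_abs]; exact hbdd N hN ω)
    have hintchord : Integrable (fun ω =>
        Real.cosh (t * c N) + (Real.sinh (t * c N) / c N) * D N ω) μ :=
      (integrable_const _).add (hintD.const_mul _)
    have hcond1 : μ[fun ω => Real.exp (t * D N ω)|F N]
        ≤ᵐ[μ] μ[fun ω => Real.cosh (t * c N) + (Real.sinh (t * c N) / c N) * D N ω|F N] :=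
      condExp_mono hintexpD hintchord (ae_of_all _ hchord)
    have hcond2 : μ[fun ω => Real.cosh (t * c N) + (Real.sinh (t * c N) / c N) * D N ω|F N]
        =ᵐ[μ] fun _ => Real.cosh (t * c N) := by
      have h1 := condExp_add (μ := μ) (m := F N)
        (integrable_const (Real.cosh (t * c N))) (hintD.const_mul (Real.sinh (t * c N) / c N))
      refine h1.trans ?_
      have h2 : μ[fun ω => (Real.sinh (t * c N) / c N) * D N ω|F N]
          =ᵐ[μ] (Real.sinh (t * c N) / c N) • μ[D N|F N] := by
        have := condExp_smul (μ := μ) (m := F N) (Real.sinh (t * c N) / c N) (D N)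
        simpa [smul_eq_mul, Pi.smul_def] using this
      filter_upwards [h2, hmds N hN] with ω h2ω h3ω
      have hcc : (μ[fun _ => Real.cosh (t * c N)|F N]) ω = Real.cosh (t * c N) := by
        rw [condExp_const (hle N)]
      simp only [Pi.add_apply, hcc, h2ω, Pi.smul_apply, h3ω, Pi.zero_apply,
        smul_eq_mul, mul_zero, add_zero]
    have hcoshle : Real.cosh (t * c N) ≤ KD := by
      refine (Real.cosh_le_exp_half_sq (t * c N)).trans (le_of_eq ?_)
      rw [hKD]
      congr 1
      ring
    -- combine: μ[prod | F N] ≤ᵐ exp(t*S) * KD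
    have hA4 : μ[(fun ω => Real.exp (t * S ω)) * fun ω => Real.exp (t * D N ω)|F N]
        ≤ᵐ[μ] fun ω => Real.exp (t * S ω) * KD := by
      filter_upwards [hpull, hcond1, hcond2] with ω h1 h2 h3
      rw [h1]
      simp only [Pi.mul_apply]
      have := h2.trans (le_of_eq h3)
      calc Real.exp (t * S ω) * (μ[fun ω => Real.exp (t * D N ω)|F N]) ω
          ≤ Real.exp (t * S ω) * Real.cosh (t * c N) :=
            mul_le_mul_of_nonneg_left this (Real.exp_nonneg _)
        _ ≤ Real.exp (t * S ω) * KD :=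
            mul_le_mul_of_nonneg_left hcoshle (Real.exp_nonneg _)
    -- push through the outer conditional expectation
    have hintSK : Integrable (fun ω => Real.exp (t * S ω) * KD) μ := hintexpS.mul_const KD
    have hA5 : μ[μ[(fun ω => Real.exp (t * S ω)) * fun ω => Real.exp (t * D N ω)|F N]|F n0]
        ≤ᵐ[μ] μ[fun ω => Real.exp (t * S ω) * KD|F n0] :=
      condExp_mono integrable_condExp hintSK hA4
    have hA6 : μ[fun ω => Real.exp (t * S ω) * KD|F n0]
        =ᵐ[μ] KD • μ[fun ω => Real.exp (t * S ω)|F n0] := by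
      have heq : (fun ω => Real.exp (t * S ω) * KD)
          = KD • fun ω => Real.exp (t * S ω) := by
        funext ω
        simp [smul_eq_mul, mul_comm]
      rw [heq]
      exact condExp_smul (μ := μ) (m := F n0) KD _
    have hKD0 : 0 ≤ KD := Real.exp_nonneg _
    refine htower.le.trans (hA5.trans (hA6.le.trans ?_))
    filter_upwards [ih] with ω hω
    simp only [Pi.smul_apply, smul_eq_mul]
    rw [Finset.sum_Ico_succ_top hN, mul_add, Real.exp_add]
    calc KD * (μ[fun ω => Real.exp (t * S ω)|F n0]) ω
        ≤ KD * Real.exp (t ^ 2 / 2 * ∑ k ∈ Finset.Ico n0 N, c k ^ 2) :=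
          mul_le_mul_of_nonneg_left hω hKD0
      _ = Real.exp (t ^ 2 / 2 * ∑ k ∈ Finset.Ico n0 N, c k ^ 2) *
          Real.exp (t ^ 2 / 2 * c N ^ 2) := by rw [hKD]; ring

end CondTools
section Chernoff

open Filter

variable {Ω : Type*} {m m0 : MeasurableSpace Ω} {μ : MeasureTheory.Measure Ω}

lemma chernoff_set_bound [IsProbabilityMeasure μ] (hm : m ≤ m0) {G : Set Ω}
    (hGm : MeasurableSet[m] G) {f : Ω → ℝ} (hf : StronglyMeasurable f)
    (K : ℝ) (hbdd : ∀ ω, |f ω| ≤ K) (a t B : ℝ) (ht : 0 ≤ t) (hB : 0 ≤ B)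
    (hmgf : μ[fun ω => Real.exp (t * f ω)|m] ≤ᵐ[μ] fun _ => B) :
    μ (G ∩ {ω | a ≤ f ω}) ≤ ENNReal.ofReal (Real.exp (-(t * a)) * B) * μ G := by
  have hG : MeasurableSet G := hm G hGm
  have hA : MeasurableSet {ω | a ≤ f ω} := measurableSet_le measurable_const hf.measurable
  have hexp_meas : StronglyMeasurable fun ω => Real.exp (t * f ω) :=
    Real.continuous_exp.comp_stronglyMeasurable (hf.const_mul t)
  have hexp_bdd : ∀ ω, ‖Real.exp (t * f ω)‖ ≤ Real.exp (|t| * K) := by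
    intro ω
    rw [Real.norm_eq_abs, abs_of_pos (Real.exp_pos _)]
    apply Real.exp_le_exp.mpr
    calc t * f ω ≤ |t * f ω| := le_abs_self _
      _ = |t| * |f ω| := abs_mul _ _
      _ ≤ |t| * K := mul_le_mul_of_nonneg_left (hbdd ω) (abs_nonneg t)
  have hint : Integrable (fun ω => Real.exp (t * f ω)) μ :=
    integrable_of_bounded' hexp_meas.aestronglyMeasurable _ hexp_bdd
  -- real-valued bound
  have h1 : (μ (G ∩ {ω | a ≤ f ω})).toReal = ∫ _ω in G ∩ {ω | a ≤ f ω}, (1 : ℝ) ∂μ := by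
    rw [setIntegral_const, smul_eq_mul, mul_one]
    rfl
  have h2 : ∫ _ω in G ∩ {ω | a ≤ f ω}, (1 : ℝ) ∂μ
      ≤ ∫ ω in G ∩ {ω | a ≤ f ω}, Real.exp (-(t * a)) * Real.exp (t * f ω) ∂μ := by
    apply setIntegral_mono_on (integrableOn_const (measure_ne_top μ _))
      ((hint.const_mul _).integrableOn) (hG.inter hA)
    intro ω hω
    rw [← Real.exp_add]
    apply Real.one_le_exp
    have haf : a ≤ f ω := hω.2
    nlinarith
  have h3 : ∫ ω in G ∩ {ω | a ≤ f ω}, Real.exp (-(t * a)) * Real.exp (t * f ω) ∂μ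
      ≤ ∫ ω in G, Real.exp (-(t * a)) * Real.exp (t * f ω) ∂μ := by
    apply setIntegral_mono_set ((hint.const_mul _).integrableOn)
      (ae_of_all _ fun ω => by positivity)
    exact HasSubset.Subset.eventuallyLE Set.inter_subset_left
  have h4 : ∫ ω in G, Real.exp (-(t * a)) * Real.exp (t * f ω) ∂μ
      = Real.exp (-(t * a)) * ∫ ω in G, Real.exp (t * f ω) ∂μ :=
    integral_const_mul _ _
  have h5 : ∫ ω in G, Real.exp (t * f ω) ∂μ
      = ∫ ω in G, (μ[fun ω => Real.exp (t * f ω)|m]) ω ∂μ :=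
    (setIntegral_condExp hm hint hGm).symm
  have h6 : ∫ ω in G, (μ[fun ω => Real.exp (t * f ω)|m]) ω ∂μ
      ≤ ∫ _ω in G, B ∂μ :=
    setIntegral_mono_ae integrable_condExp.integrableOn
      ((integrable_const B).integrableOn) hmgf
  have h7 : ∫ _ω in G, B ∂μ = B * (μ G).toReal := by
    rw [setIntegral_const, smul_eq_mul, mul_comm]
    rfl
  have hfinal : (μ (G ∩ {ω | a ≤ f ω})).toReal
      ≤ Real.exp (-(t * a)) * B * (μ G).toReal := by
    rw [h1]
    refine (h2.trans (h3.trans ?_))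
    rw [h4]
    calc Real.exp (-(t * a)) * ∫ ω in G, Real.exp (t * f ω) ∂μ
        ≤ Real.exp (-(t * a)) * (B * (μ G).toReal) := by
          apply mul_le_mul_of_nonneg_left _ (Real.exp_nonneg _)
          rw [h5]
          exact h6.trans (le_of_eq h7)
      _ = Real.exp (-(t * a)) * B * (μ G).toReal := by ring
  calc μ (G ∩ {ω | a ≤ f ω})
      = ENNReal.ofReal ((μ (G ∩ {ω | a ≤ f ω})).toReal) :=
        (ENNReal.ofReal_toReal (measure_ne_top μ _)).symm
    _ ≤ ENNReal.ofReal (Real.exp (-(t * a)) * B * (μ G).toReal) :=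
        ENNReal.ofReal_le_ofReal hfinal
    _ = ENNReal.ofReal (Real.exp (-(t * a)) * B) * ENNReal.ofReal ((μ G).toReal) := by
        rw [ENNReal.ofReal_mul (by positivity : (0:ℝ) ≤ Real.exp (-(t * a)) * B)]
    _ = ENNReal.ofReal (Real.exp (-(t * a)) * B) * μ G := by
        rw [ENNReal.ofReal_toReal (measure_ne_top μ _)]

end Chernoff
section Master

open Filter

lemma coord_abs_le_norm {d : ℕ} (v : E d) (i : Fin d) : |v i| ≤ ‖v‖ := by
  have h1 : ‖v‖ = Real.sqrt (∑ j, ‖v j‖ ^ 2) := EuclideanSpace.norm_eq v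
  have h2 : ‖v i‖ ^ 2 ≤ ∑ j, ‖v j‖ ^ 2 :=
    Finset.single_le_sum (fun j _ => sq_nonneg ‖v j‖) (Finset.mem_univ i)
  have h3 := Real.sqrt_le_sqrt h2
  rw [Real.sqrt_sq (norm_nonneg _)] at h3
  rw [h1]
  simpa using h3

lemma master_bound {Ω : Type*} [m0 : MeasurableSpace Ω] (μ : MeasureTheory.Measure Ω)
    [IsProbabilityMeasure μ] {d : ℕ} (hd : 0 < d)
    (F : ℕ → MeasurableSpace Ω) (hle : ∀ n, F n ≤ m0) (hmono : Monotone F)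
    (n0 n : ℕ) (hn : n0 ≤ n)
    (G' : Set Ω) (hG'm : MeasurableSet[F n0] G')
    (Gset : ℕ → Set Ω) (hGm : ∀ k, MeasurableSet[F k] (Gset k))
    (hGmono : ∀ k, n0 ≤ k → k ≤ n → Gset n ⊆ Gset k)
    (Y : ℕ → Ω → E d)
    (hYmeas : ∀ k, n0 ≤ k → StronglyMeasurable[F (k + 1)] (Y k))
    (hYint : ∀ k, n0 ≤ k → Integrable (Y k) μ)
    (hYmds : ∀ k, n0 ≤ k → μ[Y k|F k] =ᵐ[μ] 0)
    (c : ℕ → ℝ) (hc : ∀ k, 0 < c k)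
    (hbd : ∀ k, n0 ≤ k → k ≤ n → ∀ ω ∈ Gset k, ‖Y k ω‖ ≤ c k)
    (ε : ℝ) (hε : 0 < ε) :
    μ (G' ∩ (Gset n ∩ {ω | ε ≤ ‖∑ k ∈ Finset.Icc n0 n, Y k ω‖}))
      ≤ ENNReal.ofReal (2 * d *
          Real.exp (-ε ^ 2 / (2 * d * ∑ k ∈ Finset.Icc n0 n, c k ^ 2))) * μ G' := by
  have hdR : (0:ℝ) < d := Nat.cast_pos.mpr hd
  set V : ℝ := ∑ k ∈ Finset.Icc n0 n, c k ^ 2 with hV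
  have hV0 : 0 < V := by
    apply Finset.sum_pos (fun k _ => pow_pos (hc k) 2)
    exact ⟨n0, Finset.mem_Icc.mpr ⟨le_refl n0, hn⟩⟩
  set a : ℝ := ε / Real.sqrt d with ha
  have hsd : (0:ℝ) < Real.sqrt d := Real.sqrt_pos.mpr hdR
  have ha0 : 0 < a := div_pos hε hsd
  have ha2 : a ^ 2 = ε ^ 2 / d := by
    rw [ha, div_pow, Real.sq_sqrt hdR.le]
  set t : ℝ := a / V with htdef
  have ht0 : 0 ≤ t := le_of_lt (div_pos ha0 hV0)
  -- the scalar martingale increments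
  set D : ℝ → Fin d → ℕ → Ω → ℝ := fun s i k ω =>
    if n0 ≤ k ∧ k ≤ n then Set.indicator (Gset k) (fun ω' => s * (Y k ω' i)) ω else 0
    with hD
  -- the key one-sided bound
  have key : ∀ (s : ℝ), |s| = 1 → ∀ i : Fin d,
      μ (G' ∩ {ω | a ≤ ∑ k ∈ Finset.Icc n0 n, D s i k ω})
        ≤ ENNReal.ofReal (Real.exp (-(a ^ 2 / (2 * V)))) * μ G' := by
    intro s hs i
    have hDmeas : ∀ k, n0 ≤ k → StronglyMeasurable[F (k + 1)] (D s i k) := by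
      intro k hk
      rw [hD]
      by_cases hkn : k ≤ n
      · simp only [hk, hkn, and_self, if_true]
        apply StronglyMeasurable.indicator
        · have hcoord : StronglyMeasurable[F (k + 1)] fun ω => (Y k ω) i :=
            ((EuclideanSpace.proj (𝕜 := ℝ) i).continuous).comp_stronglyMeasurable (hYmeas k hk)
          exact hcoord.const_mul s
        · exact (hmono (Nat.le_succ k)) _ (hGm k)
      · simp only [hkn, and_false, if_false]
        exact stronglyMeasurable_const
    have hDbdd : ∀ k, n0 ≤ k → ∀ ω, |D s i k ω| ≤ c k := by
      intro k hk ω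
      rw [hD]
      by_cases hkn : k ≤ n
      · simp only [hk, hkn, and_self, if_true]
        by_cases hω : ω ∈ Gset k
        · rw [Set.indicator_of_mem hω, abs_mul, hs, one_mul]
          exact (coord_abs_le_norm _ i).trans (hbd k hk hkn ω hω)
        · rw [Set.indicator_of_notMem hω]
          simpa using (hc k).le
      · simp only [hkn, and_false, if_false]
        simpa using (hc k).le
    have hDmds : ∀ k, n0 ≤ k → μ[D s i k|F k] =ᵐ[μ] 0 := by
      intro k hk
      rw [hD]
      by_cases hkn : k ≤ n
      · simp only [hk, hkn, and_self, if_true]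
        set T : E d →L[ℝ] ℝ := s • EuclideanSpace.proj (𝕜 := ℝ) i with hT
        have hφ : (fun ω => s * (Y k ω i)) = fun ω => T (Y k ω) := by
          funext ω
          simp [hT, ContinuousLinearMap.smul_apply, smul_eq_mul]
        have hφ0 : μ[fun ω => T (Y k ω)|F k] =ᵐ[μ] 0 :=
          condexp_clm_zero (hle k) T (hYint k hk) (hYmds k hk)
        have hφint : Integrable (fun ω => T (Y k ω)) μ :=
          T.integrable_comp (hYint k hk)
        have hgmeas : StronglyMeasurable[F k] ((Gset k).indicator (fun _ => (1:ℝ))) :=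
          stronglyMeasurable_const.indicator (hGm k)
        have hprodeq : (fun ω => Set.indicator (Gset k) (fun ω' => s * (Y k ω' i)) ω)
            = ((Gset k).indicator (fun _ => (1:ℝ))) * fun ω => T (Y k ω) := by
          funext ω
          by_cases hω : ω ∈ Gset k
          · simp [Set.indicator_of_mem hω, hT, ContinuousLinearMap.smul_apply,
              smul_eq_mul, PiLp.proj_apply]
          · simp [Set.indicator_of_notMem hω]
        rw [hprodeq]
        have hint2 : Integrable (((Gset k).indicator (fun _ => (1:ℝ))) *
            fun ω => T (Y k ω)) μ := by
          apply hφint.bdd_mul (c := 1) (hgmeas.mono (hle k)).aestronglyMeasurable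
          refine ae_of_all _ fun ω => ?_
          by_cases hω : ω ∈ Gset k <;>
            simp [Set.indicator_of_mem, Set.indicator_of_notMem, hω]
        have hpull := condExp_mul_of_stronglyMeasurable_left (μ := μ) hgmeas hint2 hφint
        refine hpull.trans ?_
        filter_upwards [hφ0] with ω hω
        simp only [Pi.mul_apply, hω, Pi.zero_apply, mul_zero]
      · simp only [hkn, and_false, if_false]
        exact Filter.EventuallyEq.of_eq condExp_zero
    -- apply Azuma mgf + Chernoff
    have hmgf := azuma_mgf F hle hmono (D s i) c n0 hDmeas (fun k _ => hc k)
      hDbdd hDmds t (n + 1) (Nat.le_succ_of_le hn)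
    rw [Finset.Ico_add_one_right_eq_Icc] at hmgf
    have hfDmeas : StronglyMeasurable fun ω => ∑ k ∈ Finset.Icc n0 n, D s i k ω := by
      apply Finset.stronglyMeasurable_fun_sum
      intro k hk
      rw [Finset.mem_Icc] at hk
      exact (hDmeas k hk.1).mono (hle (k + 1))
    have hfDbdd : ∀ ω, |∑ k ∈ Finset.Icc n0 n, D s i k ω| ≤ ∑ k ∈ Finset.Icc n0 n, c k := by
      intro ω
      refine (Finset.abs_sum_le_sum_abs _ _).trans ?_
      apply Finset.sum_le_sum
      intro k hk
      rw [Finset.mem_Icc] at hk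
      exact hDbdd k hk.1 ω
    have hcher := chernoff_set_bound (hle n0) hG'm hfDmeas _ hfDbdd a t
      (Real.exp (t ^ 2 / 2 * V)) ht0 (Real.exp_nonneg _) hmgf
    refine hcher.trans (le_of_eq ?_)
    congr 2
    rw [← Real.exp_add]
    congr 1
    rw [htdef]
    field_simp
    ring
  -- inclusion into the union of coordinate events
  have hincl : G' ∩ (Gset n ∩ {ω | ε ≤ ‖∑ k ∈ Finset.Icc n0 n, Y k ω‖})
      ⊆ ⋃ i : Fin d, ((G' ∩ {ω | a ≤ ∑ k ∈ Finset.Icc n0 n, D 1 i k ω}) ∪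
          (G' ∩ {ω | a ≤ ∑ k ∈ Finset.Icc n0 n, D (-1) i k ω})) := by
    rintro ω ⟨hωG', hωGn, hωε⟩
    set v : E d := ∑ k ∈ Finset.Icc n0 n, Y k ω with hv
    have hex : ∃ i : Fin d, a ≤ |v i| := by
      by_contra hcon
      push_neg at hcon
      have hlt : ∑ j, ‖v j‖ ^ 2 < ∑ _j : Fin d, a ^ 2 := by
        apply Finset.sum_lt_sum_of_nonempty
        · exact Finset.univ_nonempty_iff.mpr ⟨⟨0, hd⟩⟩
        · intro j _
          have h1 : |v j| < a := hcon j
          have h2 : (0:ℝ) ≤ |v j| := abs_nonneg _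
          calc ‖v j‖ ^ 2 = |v j| ^ 2 := by rw [Real.norm_eq_abs]
            _ < a ^ 2 := by nlinarith
      rw [Finset.sum_const, Finset.card_univ, Fintype.card_fin, nsmul_eq_mul] at hlt
      have hda : (d : ℝ) * a ^ 2 = ε ^ 2 := by
        rw [ha2]
        field_simp
      have hnv : ε ≤ ‖v‖ := hωε
      have hnv2 : ε ^ 2 ≤ ‖v‖ ^ 2 := by nlinarith [norm_nonneg v]
      have hveq : ‖v‖ ^ 2 = ∑ j, ‖v j‖ ^ 2 := by
        rw [EuclideanSpace.norm_eq, Real.sq_sqrt]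
        positivity
      rw [hveq] at hnv2
      rw [hda] at hlt
      linarith
    obtain ⟨i, hi⟩ := hex
    have hcoord : v i = ∑ k ∈ Finset.Icc n0 n, (Y k ω i) := by
      rw [hv]
      have := map_sum (EuclideanSpace.proj (𝕜 := ℝ) i) (fun k => Y k ω) (Finset.Icc n0 n)
      exact this
    have hDsum : ∀ s : ℝ, ∑ k ∈ Finset.Icc n0 n, D s i k ω = s * v i := by
      intro s
      rw [hcoord, Finset.mul_sum]
      apply Finset.sum_congr rfl
      intro k hk
      rw [Finset.mem_Icc] at hk
      have hmem : ω ∈ Gset k := hGmono k hk.1 hk.2 hωGn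
      rw [hD]
      simp only [hk.1, hk.2, and_self, if_true]
      rw [Set.indicator_of_mem hmem]
    apply Set.mem_iUnion.mpr
    refine ⟨i, ?_⟩
    rcases le_or_gt 0 (v i) with hvi | hvi
    · left
      refine ⟨hωG', ?_⟩
      simp only [Set.mem_setOf_eq, hDsum 1, one_mul]
      rwa [abs_of_nonneg hvi] at hi
    · right
      refine ⟨hωG', ?_⟩
      simp only [Set.mem_setOf_eq, hDsum (-1)]
      rw [abs_of_neg hvi] at hi
      linarith
  -- put everything together
  refine (measure_mono hincl).trans ?_
  refine (measure_iUnion_fintype_le μ _).trans ?_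
  have hterm : ∀ i : Fin d,
      μ ((G' ∩ {ω | a ≤ ∑ k ∈ Finset.Icc n0 n, D 1 i k ω}) ∪
          (G' ∩ {ω | a ≤ ∑ k ∈ Finset.Icc n0 n, D (-1) i k ω}))
        ≤ 2 * (ENNReal.ofReal (Real.exp (-(a ^ 2 / (2 * V)))) * μ G') := by
    intro i
    refine (measure_union_le _ _).trans ?_
    rw [two_mul]
    exact add_le_add (key 1 (by norm_num) i) (key (-1) (by norm_num) i)
  refine (Finset.sum_le_sum fun i _ => hterm i).trans (le_of_eq ?_)
  rw [Finset.sum_const, Finset.card_univ, Fintype.card_fin, nsmul_eq_mul]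
  have hexp_eq : Real.exp (-(a ^ 2 / (2 * V))) = Real.exp (-ε ^ 2 / (2 * d * V)) := by
    congr 1
    rw [ha2]
    field_simp
  rw [hexp_eq]
  have h2d : ENNReal.ofReal (2 * d * Real.exp (-ε ^ 2 / (2 * d * V)))
      = (d : ℝ≥0∞) * (2 * ENNReal.ofReal (Real.exp (-ε ^ 2 / (2 * d * V)))) := by
    rw [show (2 : ℝ) * d * Real.exp (-ε ^ 2 / (2 * d * V))
        = (d : ℝ) * (2 * Real.exp (-ε ^ 2 / (2 * d * V))) by ring]
    rw [ENNReal.ofReal_mul (Nat.cast_nonneg d), ENNReal.ofReal_natCast,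
      ENNReal.ofReal_mul (by norm_num : (0:ℝ) ≤ 2)]
    norm_num
  rw [h2d]
  ring

end Master
section Filtration

variable {d : ℕ} {Ω : Type*} [m0 : MeasurableSpace Ω]

lemma natF_le (θ0 w0 : Ω → E d) (M1 M2 : ℕ → Ω → E d)
    (hθ0 : Measurable θ0) (hw0 : Measurable w0)
    (hM1 : ∀ n, Measurable (M1 n)) (hM2 : ∀ n, Measurable (M2 n)) :
    ∀ n, natF θ0 w0 M1 M2 n ≤ m0 := by
  intro n
  apply sup_le (sup_le hθ0.comap_le hw0.comap_le)
  apply iSup₂_le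
  intro k _
  exact sup_le (hM1 k).comap_le (hM2 k).comap_le

lemma natF_mono (θ0 w0 : Ω → E d) (M1 M2 : ℕ → Ω → E d) :
    Monotone (natF θ0 w0 M1 M2) := by
  intro n m hnm
  refine sup_le_sup le_rfl (biSup_mono ?_)
  intro k hk
  exact ⟨hk.1, hk.2.trans hnm⟩

lemma natF_measurable_M1 (θ0 w0 : Ω → E d) (M1 M2 : ℕ → Ω → E d) (k n : ℕ)
    (h1 : 1 ≤ k) (h2 : k ≤ n) : Measurable[natF θ0 w0 M1 M2 n] (M1 k) := by
  rw [measurable_iff_comap_le]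
  refine le_trans ?_ le_sup_right
  exact le_trans le_sup_left (le_biSup
    (fun k => MeasurableSpace.comap (M1 k) inferInstance ⊔
      MeasurableSpace.comap (M2 k) inferInstance) (Set.mem_Icc.mpr ⟨h1, h2⟩))

lemma natF_measurable_M2 (θ0 w0 : Ω → E d) (M1 M2 : ℕ → Ω → E d) (k n : ℕ)
    (h1 : 1 ≤ k) (h2 : k ≤ n) : Measurable[natF θ0 w0 M1 M2 n] (M2 k) := by
  rw [measurable_iff_comap_le]
  refine le_trans ?_ le_sup_right
  exact le_trans le_sup_right (le_biSup
    (fun k => MeasurableSpace.comap (M1 k) inferInstance ⊔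
      MeasurableSpace.comap (M2 k) inferInstance) (Set.mem_Icc.mpr ⟨h1, h2⟩))

lemma app_measurable {m : MeasurableSpace Ω} (A : Matrix (Fin d) (Fin d) ℝ)
    {g : Ω → E d} (hg : Measurable[m] g) : Measurable[m] fun ω => app A (g ω) :=
  ((Matrix.toEuclideanCLM (𝕜 := ℝ) A).continuous.measurable).comp hg

lemma theta_w_measurable (v1 v2 : E d) (Γ1 Γ2 W1 W2 : Matrix (Fin d) (Fin d) ℝ)
    (α β : ℝ) (θ w M1 M2 : ℕ → Ω → E d)
    (hθrec : ∀ (ω : Ω) (n : ℕ), θ (n + 1) ω =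
      θ n ω + steps α n • (h1 v1 Γ1 W1 (θ n ω) (w n ω) + M1 (n + 1) ω))
    (hwrec : ∀ (ω : Ω) (n : ℕ), w (n + 1) ω =
      w n ω + steps β n • (h2 v2 Γ2 W2 (θ n ω) (w n ω) + M2 (n + 1) ω)) :
    ∀ n, Measurable[natF (θ 0) (w 0) M1 M2 n] (θ n) ∧
      Measurable[natF (θ 0) (w 0) M1 M2 n] (w n) := by
  intro n
  induction n with
  | zero =>
    constructor
    · rw [measurable_iff_comap_le]
      exact le_trans le_sup_left le_sup_left
    · rw [measurable_iff_comap_le]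
      exact le_trans le_sup_right le_sup_left
  | succ n ih =>
    have hmono := natF_mono (θ 0) (w 0) M1 M2 (Nat.le_succ n)
    have hθn : Measurable[natF (θ 0) (w 0) M1 M2 (n + 1)] (θ n) := ih.1.mono hmono le_rfl
    have hwn : Measurable[natF (θ 0) (w 0) M1 M2 (n + 1)] (w n) := ih.2.mono hmono le_rfl
    have hM1' : Measurable[natF (θ 0) (w 0) M1 M2 (n + 1)] (M1 (n + 1)) :=
      natF_measurable_M1 _ _ _ _ _ _ (Nat.succ_le_succ (Nat.zero_le n)) le_rfl
    have hM2' : Measurable[natF (θ 0) (w 0) M1 M2 (n + 1)] (M2 (n + 1)) :=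
      natF_measurable_M2 _ _ _ _ _ _ (Nat.succ_le_succ (Nat.zero_le n)) le_rfl
    constructor
    · rw [show θ (n + 1) = fun ω =>
        θ n ω + steps α n • (h1 v1 Γ1 W1 (θ n ω) (w n ω) + M1 (n + 1) ω) from
        funext fun ω => hθrec ω n]
      simp only [h1]
      apply hθn.add
      apply Measurable.fun_const_smul
      exact ((measurable_const.sub (app_measurable Γ1 hθn)).sub
        (app_measurable W1 hwn)).add hM1'
    · rw [show w (n + 1) = fun ω =>
        w n ω + steps β n • (h2 v2 Γ2 W2 (θ n ω) (w n ω) + M2 (n + 1) ω) from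
        funext fun ω => hwrec ω n]
      simp only [h2]
      apply hwn.add
      apply Measurable.fun_const_smul
      exact ((measurable_const.sub (app_measurable Γ2 hθn)).sub
        (app_measurable W2 hwn)).add hM2'

lemma measSet_norm_le {Ω : Type*} {m : MeasurableSpace Ω} {d : ℕ} {f : Ω → E d}
    (hf : Measurable[m] f) (cst : E d) (r : ℝ) :
    MeasurableSet[m] {ω | ‖f ω - cst‖ ≤ r} :=
  measurableSet_le ((hf.sub measurable_const).norm) measurable_const

end Filtration
section ApplyPart

open Filter

lemma apply_part {Ω : Type*} [m0 : MeasurableSpace Ω] (μ : MeasureTheory.Measure Ω)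
    [IsProbabilityMeasure μ] {d : ℕ} (hd : 0 < d)
    (F : ℕ → MeasurableSpace Ω) (hle : ∀ n, F n ≤ m0) (hmono : Monotone F)
    (n0 n : ℕ) (hn : n0 ≤ n)
    (G' : Set Ω) (hG'm : MeasurableSet[F n0] G') (hG'0 : μ G' ≠ 0)
    (Gset : ℕ → Set Ω) (hGm : ∀ k, MeasurableSet[F k] (Gset k))
    (hGmono : ∀ k, n0 ≤ k → k ≤ n → Gset n ⊆ Gset k)
    (X : Matrix (Fin d) (Fin d) ℝ) (a q : ℝ) (ha0 : 0 < a) (hq : 0 < q)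
    (C : ℝ) (hC1 : 1 ≤ C)
    (hCbound : ∀ k m : ℕ, opNorm (Mprod X (steps a) k m) ≤
        C * Real.exp (-(q * ∑ j ∈ Finset.Icc k m, steps a j)))
    (N : ℕ → Ω → E d)
    (hNmeas : ∀ k, Measurable[F (k + 1)] (N (k + 1)))
    (hNint : ∀ k, Integrable (N (k + 1)) μ)
    (hNmds : ∀ k, μ[N (k + 1)|F k] =ᵐ[μ] 0)
    (CC : ℝ) (hCC : 0 < CC)
    (hNbd : ∀ k, n0 ≤ k → k ≤ n → ∀ ω ∈ Gset k, ‖N (k + 1) ω‖ ≤ CC)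
    (ε : ℝ) (hε : 0 < ε) :
    (μ[|G']) (Gset n ∩ {ω | ε ≤ ‖∑ k ∈ Finset.Icc n0 n, steps a k •
        app (Mprod X (steps a) (k + 1) n) (N (k + 1) ω)‖})
      ≤ ENNReal.ofReal (2 * (d : ℝ) ^ 2 * Real.exp (-ε ^ 2 / ((d : ℝ) ^ 3 *
          (2 * C ^ 2 * CC ^ 2) *
          ∑ k ∈ Finset.range (n + 1), steps a k ^ 2 *
            Real.exp (-(2 * q) * ∑ j ∈ Finset.Icc (k + 1) n, steps a j)))) := by
  have hC0 : (0:ℝ) < C := lt_of_lt_of_le one_pos hC1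
  set Y : ℕ → Ω → E d := fun k ω =>
    steps a k • app (Mprod X (steps a) (k + 1) n) (N (k + 1) ω) with hY
  set c : ℕ → ℝ := fun k =>
    steps a k * (C * Real.exp (-(q * ∑ j ∈ Finset.Icc (k + 1) n, steps a j)) * CC) with hc'
  have hcpos : ∀ k, 0 < c k := by
    intro k
    have := steps_pos a k
    positivity
  have hYmeas : ∀ k, n0 ≤ k → StronglyMeasurable[F (k + 1)] (Y k) := by
    intro k _
    exact ((app_measurable _ (hNmeas k)).const_smul (steps a k)).stronglyMeasurable
  have hYeq : ∀ k, Y k = fun ω =>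
      (steps a k • Matrix.toEuclideanCLM (𝕜 := ℝ) (Mprod X (steps a) (k + 1) n))
        (N (k + 1) ω) := by
    intro k
    funext ω
    simp [hY, ContinuousLinearMap.smul_apply, app]
  have hYint : ∀ k, n0 ≤ k → Integrable (Y k) μ := by
    intro k _
    rw [hYeq k]
    exact (steps a k • Matrix.toEuclideanCLM (𝕜 := ℝ)
      (Mprod X (steps a) (k + 1) n)).integrable_comp (hNint k)
  have hYmds : ∀ k, n0 ≤ k → μ[Y k|F k] =ᵐ[μ] 0 := by
    intro k _
    rw [hYeq k]
    exact condexp_clm_zero (hle k) _ (hNint k) (hNmds k)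
  have hbd : ∀ k, n0 ≤ k → k ≤ n → ∀ ω ∈ Gset k, ‖Y k ω‖ ≤ c k := by
    intro k hk1 hk2 ω hω
    rw [hY]
    simp only
    rw [norm_smul, Real.norm_eq_abs, abs_of_nonneg (steps_pos a k).le]
    apply mul_le_mul_of_nonneg_left _ (steps_pos a k).le
    refine (app_le _ _).trans ?_
    exact mul_le_mul (hCbound (k + 1) n) (hNbd k hk1 hk2 ω hω) (norm_nonneg _)
      (by positivity)
  have hmaster := master_bound μ hd F hle hmono n0 n hn G' hG'm Gset hGm hGmono
    Y hYmeas hYint hYmds c hcpos hbd ε hε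
  -- conditional probability
  have hG'amb : MeasurableSet G' := hle n0 _ hG'm
  have hcond : (μ[|G']) (Gset n ∩ {ω | ε ≤ ‖∑ k ∈ Finset.Icc n0 n, Y k ω‖})
      ≤ ENNReal.ofReal (2 * d *
          Real.exp (-ε ^ 2 / (2 * d * ∑ k ∈ Finset.Icc n0 n, c k ^ 2))) := by
    rw [ProbabilityTheory.cond_apply hG'amb]
    calc (μ G')⁻¹ * μ (G' ∩ (Gset n ∩ {ω | ε ≤ ‖∑ k ∈ Finset.Icc n0 n, Y k ω‖}))
        ≤ (μ G')⁻¹ * (ENNReal.ofReal (2 * d *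
            Real.exp (-ε ^ 2 / (2 * d * ∑ k ∈ Finset.Icc n0 n, c k ^ 2))) * μ G') :=
          mul_le_mul_of_nonneg_left hmaster (zero_le)
      _ = ENNReal.ofReal (2 * d *
            Real.exp (-ε ^ 2 / (2 * d * ∑ k ∈ Finset.Icc n0 n, c k ^ 2))) *
            ((μ G')⁻¹ * μ G') := by ring
      _ = _ := by
          rw [ENNReal.inv_mul_cancel hG'0 (MeasureTheory.measure_ne_top μ G'), mul_one]
  refine hcond.trans (ENNReal.ofReal_le_ofReal ?_)
  -- real arithmetic
  have hdR : (0:ℝ) < d := Nat.cast_pos.mpr hd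
  have hd1 : (1:ℝ) ≤ d := Nat.one_le_cast.mpr hd
  set V : ℝ := ∑ k ∈ Finset.Icc n0 n, c k ^ 2 with hV
  set SA : ℝ := ∑ k ∈ Finset.range (n + 1), steps a k ^ 2 *
    Real.exp (-(2 * q) * ∑ j ∈ Finset.Icc (k + 1) n, steps a j) with hSA
  have hV0 : 0 < V := by
    apply Finset.sum_pos (fun k _ => pow_pos (hcpos k) 2)
    exact ⟨n0, Finset.mem_Icc.mpr ⟨le_refl n0, hn⟩⟩
  have hSA0 : 0 < SA := by
    apply Finset.sum_pos
    · intro k _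
      have := steps_pos a k
      positivity
    · exact ⟨0, Finset.mem_range.mpr (Nat.succ_pos n)⟩
  have hck2 : ∀ k, c k ^ 2 = C ^ 2 * CC ^ 2 * (steps a k ^ 2 *
      Real.exp (-(2 * q) * ∑ j ∈ Finset.Icc (k + 1) n, steps a j)) := by
    intro k
    have hex : Real.exp (-(q * ∑ j ∈ Finset.Icc (k + 1) n, steps a j)) ^ 2
        = Real.exp (-(2 * q) * ∑ j ∈ Finset.Icc (k + 1) n, steps a j) := by
      rw [sq, ← Real.exp_add]
      congr 1
      ring
    rw [hc']
    simp only
    rw [mul_pow, mul_pow, mul_pow, hex]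
    ring
  have hVle : V ≤ C ^ 2 * CC ^ 2 * SA := by
    rw [hV, hSA, Finset.mul_sum]
    rw [Finset.sum_congr rfl fun k _ => hck2 k]
    apply Finset.sum_le_sum_of_subset_of_nonneg
    · intro k hk
      rw [Finset.mem_Icc] at hk
      rw [Finset.mem_range]
      omega
    · intro k _ _
      have := steps_pos a k
      positivity
  have hkey : 2 * d * V ≤ (d:ℝ) ^ 3 * (2 * C ^ 2 * CC ^ 2) * SA := by
    calc (2:ℝ) * d * V ≤ 2 * d * (C ^ 2 * CC ^ 2 * SA) := by
          apply mul_le_mul_of_nonneg_left hVle (by positivity)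
      _ = (d:ℝ) * (2 * C ^ 2 * CC ^ 2) * SA := by ring
      _ ≤ (d:ℝ) ^ 3 * (2 * C ^ 2 * CC ^ 2) * SA := by
          have hd3 : (d:ℝ) ≤ (d:ℝ) ^ 3 := by
            have h2 : (1:ℝ) ≤ (d:ℝ) ^ 2 := one_le_pow₀ hd1
            calc (d:ℝ) = d * 1 := (mul_one _).symm
              _ ≤ (d:ℝ) * (d:ℝ) ^ 2 := mul_le_mul_of_nonneg_left h2 hdR.le
              _ = (d:ℝ) ^ 3 := by ring
          apply mul_le_mul_of_nonneg_right _ hSA0.le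
          apply mul_le_mul_of_nonneg_right hd3 (by positivity)
  have hexpcmp : Real.exp (-ε ^ 2 / (2 * d * V))
      ≤ Real.exp (-ε ^ 2 / ((d:ℝ) ^ 3 * (2 * C ^ 2 * CC ^ 2) * SA)) := by
    apply Real.exp_le_exp.mpr
    rw [neg_div, neg_div]
    apply neg_le_neg
    exact div_le_div_of_nonneg_left (sq_nonneg ε) (by positivity) hkey
  have hd2 : (d:ℝ) ≤ (d:ℝ) ^ 2 := by
    calc (d:ℝ) = d * 1 := (mul_one _).symm
      _ ≤ (d:ℝ) * (d:ℝ) := mul_le_mul_of_nonneg_left hd1 hdR.le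
      _ = (d:ℝ) ^ 2 := by ring
  calc 2 * (d:ℝ) * Real.exp (-ε ^ 2 / (2 * d * V))
      ≤ 2 * (d:ℝ) * Real.exp (-ε ^ 2 / ((d:ℝ) ^ 3 * (2 * C ^ 2 * CC ^ 2) * SA)) := by
        apply mul_le_mul_of_nonneg_left hexpcmp (by positivity)
    _ ≤ 2 * (d:ℝ) ^ 2 * Real.exp (-ε ^ 2 / ((d:ℝ) ^ 3 * (2 * C ^ 2 * CC ^ 2) * SA)) := by
        apply mul_le_mul_of_nonneg_right _ (Real.exp_nonneg _)
        linarith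

end ApplyPart
/-- Lemma `azuma-hoeffding`.
For every `n ≥ n₀` and every `ε > 0`,
`Pr (G_n ∩ {‖L^{(θ)}_{n+1}‖ ≥ ε} | G'_{n₀}) ≤ 2d² exp (−ε²/(d³ L_θ a_{n+1}))` and
`Pr (G_n ∩ {‖L^{(w)}_{n+1}‖ ≥ ε} | G'_{n₀}) ≤ 2d² exp (−ε²/(d³ L_w b_{n+1}))`, where
`a_{n+1} = Σ_{k=0}^n α_k² e^{−2q₁ Σ_{j=k+1}^n α_j}`,
`b_{n+1} = Σ_{k=0}^n β_k² e^{−2q₂ Σ_{j=k+1}^n β_j}`, and `L_θ, L_w`, `C_R^w` are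
explicit positive constants (`C_R^θ = 3`). -/
theorem stmt14 {Ω : Type*} [MeasurableSpace Ω] (μ : Measure Ω) [IsProbabilityMeasure μ]
    {d : ℕ} (hd : 0 < d)
    (v1 v2 : E d) (Γ1 Γ2 W1 W2 : Matrix (Fin d) (Fin d) ℝ)
    (hA1W2 : PosDefNS W2) (hA1X1 : PosDefNS (X1 Γ1 Γ2 W1 W2))
    (α β : ℝ) (hβ : 0 < β) (hβα : β < α) (hα : α < 1)
    (p δ Rθ Rw m1 m2 : ℝ)
    (hp : 1 < p) (hδ0 : 0 < δ) (hδ1 : δ < 1) (hRθ : 0 < Rθ) (hRw : 0 < Rw)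
    (q1 q2 : ℝ)
    (hq1 : q1 = lambdaMin (X1 Γ1 Γ2 W1 W2 + (X1 Γ1 Γ2 W1 W2)ᵀ) / 4)
    (hq2 : q2 = lambdaMin (W2 + W2ᵀ) / 4)
    (θ w : ℕ → Ω → E d) (M1 M2 : ℕ → Ω → E d)
    (hθrec : ∀ (ω : Ω) (n : ℕ), θ (n + 1) ω =
      θ n ω + steps α n • (h1 v1 Γ1 W1 (θ n ω) (w n ω) + M1 (n + 1) ω))
    (hwrec : ∀ (ω : Ω) (n : ℕ), w (n + 1) ω =
      w n ω + steps β n • (h2 v2 Γ2 W2 (θ n ω) (w n ω) + M2 (n + 1) ω))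
    (hθ0 : Measurable (θ 0)) (hw0 : Measurable (w 0))
    (hM1meas : ∀ n, Measurable (M1 n)) (hM2meas : ∀ n, Measurable (M2 n))
    (hM1int : ∀ n, Integrable (M1 (n + 1)) μ) (hM2int : ∀ n, Integrable (M2 (n + 1)) μ)
    (hM1mds : ∀ n, μ[M1 (n + 1) | natF (θ 0) (w 0) M1 M2 n] =ᵐ[μ] 0)
    (hM2mds : ∀ n, μ[M2 (n + 1) | natF (θ 0) (w 0) M1 M2 n] =ᵐ[μ] 0)
    (hM1bdd : ∀ (n : ℕ) (ω : Ω), ‖M1 (n + 1) ω‖ ≤ m1 * (1 + ‖θ n ω‖ + ‖w n ω‖))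
    (hM2bdd : ∀ (n : ℕ) (ω : Ω), ‖M2 (n + 1) ω‖ ≤ m2 * (1 + ‖θ n ω‖ + ‖w n ω‖))
    (n0 : ℕ)
    (hG' : μ {ω | ‖θ n0 ω - thetaStar v1 v2 Γ1 Γ2 W1 W2‖ ≤ Rθ ∧
                  ‖w n0 ω - wStar v1 v2 Γ1 Γ2 W1 W2‖ ≤ Rw} ≠ 0) :
    ∃ (CRw Lθc Lwc : ℝ), 0 < CRw ∧ 0 < Lθc ∧ 0 < Lwc ∧
      ∀ n : ℕ, n0 ≤ n → ∀ ε : ℝ, 0 < ε →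
        (μ[|{ω | ‖θ n0 ω - thetaStar v1 v2 Γ1 Γ2 W1 W2‖ ≤ Rθ ∧
                 ‖w n0 ω - wStar v1 v2 Γ1 Γ2 W1 W2‖ ≤ Rw}])
          ({ω | ∀ k : ℕ, n0 ≤ k → k ≤ n →
              ‖θ k ω - thetaStar v1 v2 Γ1 Γ2 W1 W2‖ ≤ 3 * Rθ ∧
              ‖w k ω - wStar v1 v2 Γ1 Γ2 W1 W2‖ ≤ CRw * Rw} ∩
            {ω | ε ≤ ‖Lth Γ1 Γ2 W1 W2 α M1 M2 n0 n ω‖})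
          ≤ ENNReal.ofReal (2 * (d : ℝ) ^ 2 *
              Real.exp (-ε ^ 2 / ((d : ℝ) ^ 3 * Lθc *
                ∑ k ∈ Finset.range (n + 1), steps α k ^ 2 *
                  Real.exp (-(2 * q1) * ∑ j ∈ Finset.Icc (k + 1) n, steps α j)))) ∧
        (μ[|{ω | ‖θ n0 ω - thetaStar v1 v2 Γ1 Γ2 W1 W2‖ ≤ Rθ ∧
                 ‖w n0 ω - wStar v1 v2 Γ1 Γ2 W1 W2‖ ≤ Rw}])
          ({ω | ∀ k : ℕ, n0 ≤ k → k ≤ n →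
              ‖θ k ω - thetaStar v1 v2 Γ1 Γ2 W1 W2‖ ≤ 3 * Rθ ∧
              ‖w k ω - wStar v1 v2 Γ1 Γ2 W1 W2‖ ≤ CRw * Rw} ∩
            {ω | ε ≤ ‖Lww W2 β M2 n0 n ω‖})
          ≤ ENNReal.ofReal (2 * (d : ℝ) ^ 2 *
              Real.exp (-ε ^ 2 / ((d : ℝ) ^ 3 * Lwc *
                ∑ k ∈ Finset.range (n + 1), steps β k ^ 2 *
                  Real.exp (-(2 * q2) * ∑ j ∈ Finset.Icc (k + 1) n, steps β j)))) := by
  classical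
  set F : ℕ → MeasurableSpace Ω := natF (θ 0) (w 0) M1 M2 with hF
  have hle : ∀ n, F n ≤ ‹MeasurableSpace Ω› :=
    natF_le (θ 0) (w 0) M1 M2 hθ0 hw0 hM1meas hM2meas
  have hmonoF : Monotone F := natF_mono (θ 0) (w 0) M1 M2
  have hθw := theta_w_measurable v1 v2 Γ1 Γ2 W1 W2 α β θ w M1 M2 hθrec hwrec
  set θs := thetaStar v1 v2 Γ1 Γ2 W1 W2 with hθsdef
  set ws := wStar v1 v2 Γ1 Γ2 W1 W2 with hwsdef
  set G' : Set Ω := {ω | ‖θ n0 ω - θs‖ ≤ Rθ ∧ ‖w n0 ω - ws‖ ≤ Rw} with hG'def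
  have hG'm : MeasurableSet[F n0] G' := by
    have hθm : Measurable[F n0] (θ n0) := (hθw n0).1
    have hwm : Measurable[F n0] (w n0) := (hθw n0).2
    have hsplit : G' = {ω | ‖θ n0 ω - θs‖ ≤ Rθ} ∩ {ω | ‖w n0 ω - ws‖ ≤ Rw} := by
      ext ω
      simp [hG'def, Set.mem_setOf_eq, Set.mem_inter_iff]
    rw [hsplit]
    exact (measSet_norm_le hθm θs Rθ).inter (measSet_norm_le hwm ws Rw)
  obtain ⟨ω₀, hω₀⟩ := MeasureTheory.nonempty_of_measure_ne_zero hG'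
  have hm1 : 0 ≤ m1 := by
    by_contra hcon
    push_neg at hcon
    have h2 := hM1bdd 0 ω₀
    have h3 : m1 * (1 + ‖θ 0 ω₀‖ + ‖w 0 ω₀‖) < 0 :=
      mul_neg_of_neg_of_pos hcon (by positivity)
    linarith [norm_nonneg (M1 1 ω₀)]
  have hm2 : 0 ≤ m2 := by
    by_contra hcon
    push_neg at hcon
    have h2 := hM2bdd 0 ω₀
    have h3 : m2 * (1 + ‖θ 0 ω₀‖ + ‖w 0 ω₀‖) < 0 :=
      mul_neg_of_neg_of_pos hcon (by positivity)
    linarith [norm_nonneg (M2 1 ω₀)]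
  obtain ⟨hq1pos, Cθ, hCθ1, hCθ⟩ :=
    exists_prod_bound hd _ hA1X1 q1 hq1 α (by linarith) (le_of_lt hα)
  obtain ⟨hq2pos, Cw, hCw1, hCw⟩ :=
    exists_prod_bound hd _ hA1W2 q2 hq2 β hβ (by linarith)
  set ρ : ℝ := 1 + (‖θs‖ + 3 * Rθ) + (‖ws‖ + 1 * Rw) with hρdef
  have hρ0 : 0 < ρ := by positivity
  set A : Matrix (Fin d) (Fin d) ℝ := W1 * W2⁻¹ with hAdef
  set CCθ : ℝ := m1 * ρ + opNorm A * (m2 * ρ) + 1 with hCCθdef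
  set CCw : ℝ := m2 * ρ + 1 with hCCwdef
  have hCCθ0 : 0 < CCθ := by
    have h1 : 0 ≤ m1 * ρ := mul_nonneg hm1 hρ0.le
    have h2 : 0 ≤ opNorm A * (m2 * ρ) := mul_nonneg (opNormNN A) (mul_nonneg hm2 hρ0.le)
    rw [hCCθdef]
    linarith
  have hCCw0 : 0 < CCw := by
    have h1 : 0 ≤ m2 * ρ := mul_nonneg hm2 hρ0.le
    rw [hCCwdef]
    linarith
  have hCθ0 : (0:ℝ) < Cθ := lt_of_lt_of_le one_pos hCθ1
  have hCw0 : (0:ℝ) < Cw := lt_of_lt_of_le one_pos hCw1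
  refine ⟨1, 2 * Cθ ^ 2 * CCθ ^ 2, 2 * Cw ^ 2 * CCw ^ 2, one_pos, by positivity,
    by positivity, ?_⟩
  intro n hn ε hε
  set Gs : ℕ → Set Ω := fun m => {ω | ∀ k, n0 ≤ k → k ≤ m →
    ‖θ k ω - θs‖ ≤ 3 * Rθ ∧ ‖w k ω - ws‖ ≤ 1 * Rw} with hGsdef
  have hGsm : ∀ k, MeasurableSet[F k] (Gs k) := by
    intro k
    have hset : Gs k = ⋂ (j : ℕ), ⋂ (_ : n0 ≤ j), ⋂ (_ : j ≤ k),
        ({ω | ‖θ j ω - θs‖ ≤ 3 * Rθ} ∩ {ω | ‖w j ω - ws‖ ≤ 1 * Rw}) := by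
      ext ω
      simp only [hGsdef, Set.mem_setOf_eq, Set.mem_iInter, Set.mem_inter_iff]
    rw [hset]
    refine MeasurableSet.iInter fun j => MeasurableSet.iInter fun hj1 =>
      MeasurableSet.iInter fun hj2 => ?_
    have hθj : Measurable[F k] (θ j) := (hθw j).1.mono (hmonoF hj2) le_rfl
    have hwj : Measurable[F k] (w j) := (hθw j).2.mono (hmonoF hj2) le_rfl
    exact (measSet_norm_le hθj θs (3 * Rθ)).inter (measSet_norm_le hwj ws (1 * Rw))
  have hGsmono : ∀ k, n0 ≤ k → k ≤ n → Gs n ⊆ Gs k := by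
    intro k _ hk2 ω hω j hj1 hj2
    exact hω j hj1 (hj2.trans hk2)
  constructor
  · -- θ part
    set NN : ℕ → Ω → E d := fun k ω => M1 k ω - app A (M2 k ω) with hNNdef
    have hNmeas : ∀ k, Measurable[F (k + 1)] (NN (k + 1)) := by
      intro k
      exact (natF_measurable_M1 (θ 0) (w 0) M1 M2 (k + 1) (k + 1)
        (Nat.succ_le_succ (Nat.zero_le k)) le_rfl).sub
        (app_measurable A (natF_measurable_M2 (θ 0) (w 0) M1 M2 (k + 1) (k + 1)
          (Nat.succ_le_succ (Nat.zero_le k)) le_rfl))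
    have hNint : ∀ k, Integrable (NN (k + 1)) μ := by
      intro k
      exact (hM1int k).sub
        ((Matrix.toEuclideanCLM (𝕜 := ℝ) A).integrable_comp (hM2int k))
    have hNmds : ∀ k, μ[NN (k + 1)|F k] =ᵐ[μ] 0 := by
      intro k
      have hg : Integrable (fun ω => app A (M2 (k + 1) ω)) μ :=
        (Matrix.toEuclideanCLM (𝕜 := ℝ) A).integrable_comp (hM2int k)
      have hsub := condExp_sub (μ := μ) (m := F k) (hM1int k) hg
      have h2 : μ[fun ω => app A (M2 (k + 1) ω)|F k] =ᵐ[μ] 0 :=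
        condexp_clm_zero (hle k) (Matrix.toEuclideanCLM (𝕜 := ℝ) A) (hM2int k) (hM2mds k)
      have heq : NN (k + 1) = M1 (k + 1) - fun ω => app A (M2 (k + 1) ω) := rfl
      rw [heq]
      refine hsub.trans ?_
      filter_upwards [hM1mds k, h2] with ω h1ω h2ω
      simp only [Pi.sub_apply, h1ω, h2ω, Pi.zero_apply, sub_zero]
    have hNbd : ∀ k, n0 ≤ k → k ≤ n → ∀ ω ∈ Gs k, ‖NN (k + 1) ω‖ ≤ CCθ := by
      intro k hk1 _ ω hω
      obtain ⟨hθb, hwb⟩ := hω k hk1 le_rfl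
      have hθn : ‖θ k ω‖ ≤ ‖θs‖ + 3 * Rθ := by
        have := norm_sub_norm_le (θ k ω) θs
        linarith
      have hwn : ‖w k ω‖ ≤ ‖ws‖ + 1 * Rw := by
        have := norm_sub_norm_le (w k ω) ws
        linarith
      have hsum : 1 + ‖θ k ω‖ + ‖w k ω‖ ≤ ρ := by rw [hρdef]; linarith
      have hM1b : ‖M1 (k + 1) ω‖ ≤ m1 * ρ :=
        (hM1bdd k ω).trans (mul_le_mul_of_nonneg_left hsum hm1)
      have hM2b : ‖M2 (k + 1) ω‖ ≤ m2 * ρ :=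
        (hM2bdd k ω).trans (mul_le_mul_of_nonneg_left hsum hm2)
      have happb : ‖app A (M2 (k + 1) ω)‖ ≤ opNorm A * (m2 * ρ) :=
        (app_le A _).trans (mul_le_mul_of_nonneg_left hM2b (opNormNN A))
      calc ‖NN (k + 1) ω‖ ≤ ‖M1 (k + 1) ω‖ + ‖app A (M2 (k + 1) ω)‖ := norm_sub_le _ _
        _ ≤ m1 * ρ + opNorm A * (m2 * ρ) := add_le_add hM1b happb
        _ ≤ CCθ := by rw [hCCθdef]; linarith
    have hpart := apply_part μ hd F hle hmonoF n0 n hn G' hG'm hG' Gs hGsm hGsmono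
      (X1 Γ1 Γ2 W1 W2) α q1 (by linarith) hq1pos Cθ hCθ1 hCθ NN hNmeas hNint hNmds
      CCθ hCCθ0 hNbd ε hε
    have hLeq : {ω | ε ≤ ‖Lth Γ1 Γ2 W1 W2 α M1 M2 n0 n ω‖}
        = {ω | ε ≤ ‖∑ k ∈ Finset.Icc n0 n, steps α k •
            app (Mprod (X1 Γ1 Γ2 W1 W2) (steps α) (k + 1) n) (NN (k + 1) ω)‖} := rfl
    rw [hLeq]
    exact hpart
  · -- w part
    have hNmeas : ∀ k, Measurable[F (k + 1)] (M2 (k + 1)) := by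
      intro k
      exact natF_measurable_M2 (θ 0) (w 0) M1 M2 (k + 1) (k + 1)
        (Nat.succ_le_succ (Nat.zero_le k)) le_rfl
    have hNbd : ∀ k, n0 ≤ k → k ≤ n → ∀ ω ∈ Gs k, ‖M2 (k + 1) ω‖ ≤ CCw := by
      intro k hk1 _ ω hω
      obtain ⟨hθb, hwb⟩ := hω k hk1 le_rfl
      have hθn : ‖θ k ω‖ ≤ ‖θs‖ + 3 * Rθ := by
        have := norm_sub_norm_le (θ k ω) θs
        linarith
      have hwn : ‖w k ω‖ ≤ ‖ws‖ + 1 * Rw := by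
        have := norm_sub_norm_le (w k ω) ws
        linarith
      have hsum : 1 + ‖θ k ω‖ + ‖w k ω‖ ≤ ρ := by rw [hρdef]; linarith
      have hM2b : ‖M2 (k + 1) ω‖ ≤ m2 * ρ :=
        (hM2bdd k ω).trans (mul_le_mul_of_nonneg_left hsum hm2)
      rw [hCCwdef]
      linarith
    have hpart := apply_part μ hd F hle hmonoF n0 n hn G' hG'm hG' Gs hGsm hGsmono
      W2 β q2 hβ hq2pos Cw hCw1 hCw M2 hNmeas hM2int hM2mds
      CCw hCCw0 hNbd ε hε
    have hLeq : {ω | ε ≤ ‖Lww W2 β M2 n0 n ω‖}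
        = {ω | ε ≤ ‖∑ k ∈ Finset.Icc n0 n, steps β k •
            app (Mprod W2 (steps β) (k + 1) n) (M2 (k + 1) ω)‖} := rfl
    rw [hLeq]
    exact hpart
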